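/- Let c > 0 and let Q(x) = ∫_x^∞ (2π)^{-1/2} e^{-t²/2} dt. Define B(φ) = √(8πc) · sin φ · exp(2c sin²φ) · Q(2√c · sin φ) for φ ∈ (0, π/2]. Then 0 < B(φ) < 1 for every φ ∈ (0, π/2], and the sequence n ↦ (1/π)·∫_0^{π/2} B(φ)ⁿ dφ is strictly decreasing in n ∈ ℕ. -/

import Mathlib

open MeasureTheory Set Real

noncomputable def gaussQ (x : ℝ) : ℝ :=
  ∫ t in Set.Ioi x, (2 * Real.pi) ^ (-(1 : ℝ) / 2) * Real.exp (-t ^ 2 / 2)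

lemma gauss_int : Integrable (fun t : ℝ => (2 * Real.pi) ^ (-(1 : ℝ) / 2) * Real.exp (-t ^ 2 / 2)) := by
  have h := (integrable_exp_neg_mul_sq (by norm_num : (0:ℝ) < 1/2)).const_mul
    ((2 * Real.pi) ^ (-(1 : ℝ) / 2))
  convert h using 2 with t
  ring_nf

lemma tmul_int : Integrable (fun t : ℝ => t * Real.exp (-t ^ 2 / 2)) := by
  have h := integrable_mul_exp_neg_mul_sq (by norm_num : (0:ℝ) < 1/2)
  convert h using 2 with t
  ring_nf

lemma tail_exp (x : ℝ) : ∫ t in Set.Ioi x, t * Real.exp (-t ^ 2 / 2) = Real.exp (-x ^ 2 / 2) := by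
  have hderiv : ∀ t ∈ Set.Ioi x, HasDerivAt (fun t : ℝ => -Real.exp (-t ^ 2 / 2))
      (t * Real.exp (-t ^ 2 / 2)) t := by
    intro t _
    have h1 : HasDerivAt (fun t : ℝ => -t ^ 2 / 2) (-t) t := by
      have := ((hasDerivAt_pow 2 t).neg).div_const 2
      simpa using this.congr_deriv (by push_cast; ring)
    have := (h1.exp).neg
    exact this.congr_deriv (by ring)
  have htend : Filter.Tendsto (fun t : ℝ => -Real.exp (-t ^ 2 / 2)) Filter.atTop (nhds 0) := by
    rw [show (0:ℝ) = -0 by norm_num]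
    refine (Real.tendsto_exp_atBot.comp ?_).neg
    apply Filter.tendsto_atBot_mono (fun t : ℝ => le_refl (-t^2/2))
    exact Filter.Tendsto.atBot_div_const (by norm_num)
      (Filter.tendsto_neg_atBot_iff.mpr (Filter.tendsto_pow_atTop (by norm_num : (2:ℕ) ≠ 0)))
  have := integral_Ioi_of_hasDerivAt_of_tendsto
    ((Continuous.continuousWithinAt (by continuity)) : ContinuousWithinAt (fun t : ℝ => -Real.exp (-t ^ 2 / 2)) (Set.Ici x) x)
    hderiv tmul_int.integrableOn htend
  simpa using this

lemma gaussQ_pos (x : ℝ) : 0 < gaussQ x := by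
  rw [gaussQ]
  rw [setIntegral_pos_iff_support_of_nonneg_ae]
  · have : Function.support (fun t : ℝ => (2 * Real.pi) ^ (-(1 : ℝ) / 2) * Real.exp (-t ^ 2 / 2))
        ∩ Set.Ioi x = Set.Ioi x := by
      apply Set.inter_eq_right.mpr
      intro t _
      simp only [Function.mem_support]
      positivity
    rw [this, Real.volume_Ioi]
    norm_num
  · filter_upwards with t
    positivity
  · exact gauss_int.integrableOn

lemma gaussQ_lt (x : ℝ) (hx : 0 < x) :
    gaussQ x < (2 * Real.pi) ^ (-(1 : ℝ) / 2) * x⁻¹ * Real.exp (-x ^ 2 / 2) := by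
  set C : ℝ := (2 * Real.pi) ^ (-(1 : ℝ) / 2) with hC
  have hCpos : 0 < C := Real.rpow_pos_of_pos (by positivity) _
  have hg : IntegrableOn (fun t : ℝ => C * x⁻¹ * (t * Real.exp (-t ^ 2 / 2))) (Set.Ioi x) :=
    (tmul_int.const_mul _).integrableOn
  have hf : IntegrableOn (fun t : ℝ => C * Real.exp (-t ^ 2 / 2)) (Set.Ioi x) :=
    gauss_int.integrableOn
  have hgi : ∫ t in Set.Ioi x, C * x⁻¹ * (t * Real.exp (-t ^ 2 / 2))
      = C * x⁻¹ * Real.exp (-x ^ 2 / 2) := by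
    rw [MeasureTheory.integral_const_mul, tail_exp]
  have hdiff : 0 < ∫ t in Set.Ioi x,
      (C * x⁻¹ * (t * Real.exp (-t ^ 2 / 2)) - C * Real.exp (-t ^ 2 / 2)) := by
    rw [setIntegral_pos_iff_support_of_nonneg_ae]
    · have hsub : Set.Ioi x ⊆ Function.support (fun t : ℝ =>
          C * x⁻¹ * (t * Real.exp (-t ^ 2 / 2)) - C * Real.exp (-t ^ 2 / 2)) ∩ Set.Ioi x := by
        intro t ht
        refine ⟨?_, ht⟩
        simp only [Function.mem_support]
        have h1 : (1:ℝ) < x⁻¹ * t := by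
          rw [lt_inv_mul_iff₀ hx]; simpa using ht
        have : C * Real.exp (-t ^ 2 / 2) * 1 < C * Real.exp (-t ^ 2 / 2) * (x⁻¹ * t) := by
          apply mul_lt_mul_of_pos_left h1; positivity
        intro h
        rw [sub_eq_zero] at h
        nlinarith [this]
      have := measure_mono (μ := (volume : Measure ℝ)) hsub
      rw [Real.volume_Ioi] at this
      exact lt_of_lt_of_le (by simp : (0:ENNReal) < ⊤) this
    · apply (MeasureTheory.ae_restrict_iff' measurableSet_Ioi).mpr
      filter_upwards with t ht
      have h1 : (1:ℝ) ≤ x⁻¹ * t := by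
        rw [le_inv_mul_iff₀ hx]; simpa using (le_of_lt ht)
      have : C * Real.exp (-t ^ 2 / 2) * 1 ≤ C * Real.exp (-t ^ 2 / 2) * (x⁻¹ * t) := by
        apply mul_le_mul_of_nonneg_left h1; positivity
      simp only [Pi.zero_apply]
      nlinarith [this]
    · exact (hg.sub hf)
  rw [MeasureTheory.integral_sub hg hf, hgi] at hdiff
  rw [gaussQ]
  simp only [← hC]
  linarith [hdiff]

lemma gaussQ_anti : Antitone gaussQ := by
  intro x y hxy
  apply setIntegral_mono_set gauss_int.integrableOn
  · filter_upwards with t; positivity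
  · exact HasSubset.Subset.eventuallyLE (Set.Ioi_subset_Ioi hxy)

lemma gaussQ_measurable : Measurable gaussQ := gaussQ_anti.measurable

theorem stmt_13 (c : ℝ) (hc : 0 < c)
    (B : ℝ → ℝ)
    (hB : ∀ φ, B φ = Real.sqrt (8 * Real.pi * c) * Real.sin φ *
      Real.exp (2 * c * Real.sin φ ^ 2) * gaussQ (2 * Real.sqrt c * Real.sin φ)) :
    (∀ φ : ℝ, 0 < φ → φ ≤ Real.pi / 2 → 0 < B φ ∧ B φ < 1) ∧
    StrictAnti (fun n : ℕ =>
      (1 / Real.pi) * ∫ φ in (0 : ℝ)..(Real.pi / 2), (B φ) ^ n) := by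
  have hπ : 0 < Real.pi := Real.pi_pos
  have hsc : Real.sqrt c ^ 2 = c := Real.sq_sqrt hc.le
  have hscpos : 0 < Real.sqrt c := Real.sqrt_pos.mpr hc
  have key : ∀ φ : ℝ, 0 < φ → φ ≤ Real.pi / 2 → 0 < B φ ∧ B φ < 1 := by
    intro φ hφ1 hφ2
    have hs : 0 < Real.sin φ :=
      Real.sin_pos_of_pos_of_lt_pi hφ1 (lt_of_le_of_lt hφ2 (by linarith))
    set x := 2 * Real.sqrt c * Real.sin φ with hx
    have hxpos : 0 < x := by positivity
    have h8 : Real.sqrt (8 * Real.pi * c) = Real.sqrt (2 * Real.pi) * (2 * Real.sqrt c) := by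
      rw [show 8 * Real.pi * c = (Real.sqrt (2 * Real.pi) * (2 * Real.sqrt c)) ^ 2 from by
          nlinarith [Real.sq_sqrt (show (0:ℝ) ≤ 2 * Real.pi by positivity), hsc],
        Real.sqrt_sq (by positivity)]
    have hexp : 2 * c * Real.sin φ ^ 2 = x ^ 2 / 2 := by
      rw [hx]; nlinarith [hsc]
    have hBφ : B φ = Real.sqrt (2 * Real.pi) * x * Real.exp (x ^ 2 / 2) * gaussQ x := by
      rw [hB φ, h8, hexp, hx]; ring
    have hQpos := gaussQ_pos x
    constructor
    · rw [hBφ]; positivity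
    · rw [hBφ]
      have hlt := gaussQ_lt x hxpos
      have h2 : Real.sqrt (2 * Real.pi) * x * Real.exp (x ^ 2 / 2) * gaussQ x <
          Real.sqrt (2 * Real.pi) * x * Real.exp (x ^ 2 / 2) *
            ((2 * Real.pi) ^ (-(1 : ℝ) / 2) * x⁻¹ * Real.exp (-x ^ 2 / 2)) := by
        apply mul_lt_mul_of_pos_left hlt
        positivity
      have h3 : Real.sqrt (2 * Real.pi) * x * Real.exp (x ^ 2 / 2) *
          ((2 * Real.pi) ^ (-(1 : ℝ) / 2) * x⁻¹ * Real.exp (-x ^ 2 / 2)) = 1 := by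
        have e1 : Real.exp (x ^ 2 / 2) * Real.exp (-x ^ 2 / 2) = 1 := by
          rw [← Real.exp_add]; ring_nf; exact Real.exp_zero
        have e2 : x * x⁻¹ = 1 := mul_inv_cancel₀ hxpos.ne'
        have e3 : Real.sqrt (2 * Real.pi) * (2 * Real.pi) ^ (-(1 : ℝ) / 2) = 1 := by
          rw [Real.sqrt_eq_rpow, ← Real.rpow_add (by positivity)]
          norm_num
        calc Real.sqrt (2 * Real.pi) * x * Real.exp (x ^ 2 / 2) *
            ((2 * Real.pi) ^ (-(1 : ℝ) / 2) * x⁻¹ * Real.exp (-x ^ 2 / 2))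
            = (Real.sqrt (2 * Real.pi) * (2 * Real.pi) ^ (-(1 : ℝ) / 2)) * (x * x⁻¹) *
              (Real.exp (x ^ 2 / 2) * Real.exp (-x ^ 2 / 2)) := by ring
          _ = 1 := by rw [e1, e2, e3]; norm_num
      linarith
  refine ⟨key, ?_⟩
  have hBm : Measurable B := by
    have hBe : B = fun φ => Real.sqrt (8 * Real.pi * c) * Real.sin φ *
        Real.exp (2 * c * Real.sin φ ^ 2) * gaussQ (2 * Real.sqrt c * Real.sin φ) := funext hB
    rw [hBe]
    apply Measurable.mul
    · fun_prop
    · exact gaussQ_measurable.comp (by fun_prop)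
  have hint : ∀ m : ℕ, IntegrableOn (fun φ => B φ ^ m) (Set.Ioc 0 (Real.pi / 2)) := by
    intro m
    apply Measure.integrableOn_of_bounded (M := 1)
    · rw [Real.volume_Ioc]; exact ENNReal.ofReal_ne_top
    · exact ((hBm.pow_const m)).aestronglyMeasurable
    · apply (MeasureTheory.ae_restrict_iff' measurableSet_Ioc).mpr
      filter_upwards with φ hφ
      obtain ⟨h0, h1⟩ := key φ hφ.1 hφ.2
      rw [Real.norm_eq_abs, abs_pow, abs_of_pos h0]
      exact pow_le_one₀ h0.le h1.le
  apply strictAnti_nat_of_succ_lt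
  intro n
  apply mul_lt_mul_of_pos_left _ (by positivity : (0:ℝ) < 1 / Real.pi)
  rw [intervalIntegral.integral_of_le (by positivity : (0:ℝ) ≤ Real.pi / 2),
    intervalIntegral.integral_of_le (by positivity : (0:ℝ) ≤ Real.pi / 2)]
  have hpos : 0 < ∫ φ in Set.Ioc (0:ℝ) (Real.pi / 2), (B φ ^ n - B φ ^ (n + 1)) := by
    rw [setIntegral_pos_iff_support_of_nonneg_ae]
    · have hsub : Set.Ioc (0:ℝ) (Real.pi / 2) ⊆
          Function.support (fun φ => B φ ^ n - B φ ^ (n + 1)) ∩ Set.Ioc 0 (Real.pi / 2) := by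
        intro φ hφ
        refine ⟨?_, hφ⟩
        obtain ⟨h0, h1⟩ := key φ hφ.1 hφ.2
        simp only [Function.mem_support]
        have : B φ ^ (n + 1) < B φ ^ n := by
          rw [pow_succ]
          nlinarith [pow_pos h0 n]
        intro h
        rw [sub_eq_zero] at h
        linarith
      have hm := measure_mono (μ := (volume : Measure ℝ)) hsub
      rw [Real.volume_Ioc] at hm
      calc (0:ENNReal) < ENNReal.ofReal (Real.pi / 2 - 0) := by
            rw [ENNReal.ofReal_pos]; linarith
        _ ≤ _ := hm
    · apply (MeasureTheory.ae_restrict_iff' measurableSet_Ioc).mpr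
      filter_upwards with φ hφ
      obtain ⟨h0, h1⟩ := key φ hφ.1 hφ.2
      simp only [Pi.zero_apply]
      have : B φ ^ (n + 1) ≤ B φ ^ n := by
        rw [pow_succ]
        nlinarith [pow_pos h0 n]
      linarith
    · exact (hint n).sub (hint (n + 1))
  rw [MeasureTheory.integral_sub (hint n) (hint (n + 1))] at hpos
  linarith
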